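/- arXiv:1805.01827 — 2 statements merged into one kernel-verified Lean document; each statement's English description precedes it below -/
import Mathlib

section
/- Let m, n ≥ 2 and let Γ be the one-vertex interface gluing of the complete graphs K_m and K_n at chosen vertices v_m ∈ K_m and v_n ∈ K_n, with (real symmetric) Laplacian matrix L. Then the Fiedler value of Γ is 1: that is, 1 is an eigenvalue of L, and every real eigenvalue λ of L with λ ≠ 0 satisfies λ ≥ 1. -/
open scoped Classical

/-- `lam` is a (real) eigenvalue of the square matrix `M`. -/
def HasEig {ι : Type*} [Fintype ι] (M : Matrix ι ι ℝ) (lam : ℝ) : Prop :=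
  ∃ v : ι → ℝ, v ≠ 0 ∧ M.mulVec v = lam • v

/-- The one-vertex interface gluing of `G₁` and `G₂` at `(v₁, v₂)`:
the graph on `V₁ ⊕ {x : V₂ // x ≠ v₂}` identifying `v₁` with `v₂`. -/
def interfaceGlueOne {V₁ V₂ : Type*} (G₁ : SimpleGraph V₁) (G₂ : SimpleGraph V₂)
    (v₁ : V₁) (v₂ : V₂) : SimpleGraph (V₁ ⊕ {x : V₂ // x ≠ v₂}) where
  Adj x y :=
    match x, y with
    | Sum.inl u, Sum.inl v => G₁.Adj u v
    | Sum.inr u, Sum.inr v => G₂.Adj u v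
    | Sum.inl u, Sum.inr v => u = v₁ ∧ G₂.Adj v₂ v
    | Sum.inr u, Sum.inl v => v = v₁ ∧ G₂.Adj v₂ u
  symm := ⟨by
    rintro (u | u) (v | v) h
    · exact G₁.adj_symm h
    · exact h
    · exact h
    · exact G₂.adj_symm h⟩
  loopless := ⟨by
    rintro (u | u) h
    · exact G₁.loopless.irrefl u h
    · exact G₂.loopless.irrefl u h⟩

open Finset Matrix

lemma lap_mulVec_ite {V : Type*} [Fintype V] [DecidableEq V] (G : SimpleGraph V) [DecidableRel G.Adj]
    (f : V → ℝ) (x : V) :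
    (G.lapMatrix ℝ *ᵥ f) x = ∑ u, if G.Adj x u then f x - f u else 0 := by
  rw [SimpleGraph.lapMatrix_mulVec_apply, SimpleGraph.degree_eq_sum_if_adj,
    SimpleGraph.neighborFinset_eq_filter, Finset.sum_filter]
  rw [Finset.sum_mul, ← Finset.sum_sub_distrib]
  congr 1; ext u
  split <;> simp

lemma sum_sub_sq {ι : Type*} [Fintype ι] (f : ι → ℝ) :
    ∑ i, ∑ j, (f i - f j)^2
      = 2*(Fintype.card ι)*(∑ i, f i^2) - 2*(∑ i, f i)^2 := by
  have h : ∀ i j : ι, (f i - f j)^2 = f i^2 - 2*(f i * f j) + f j^2 := by intro i j; ring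
  simp_rw [h, Finset.sum_add_distrib, Finset.sum_sub_distrib, ← Finset.mul_sum,
    Finset.sum_const, Finset.card_univ, nsmul_eq_mul, ← Finset.sum_mul, ← Finset.mul_sum]
  rw [show (∑ i, f i)^2 = (∑ i, f i)*(∑ i, f i) by ring]
  ring

section glue

variable (m n : ℕ) (vm : Fin m) (vn : Fin n)

local notation "Gl" => interfaceGlueOne (⊤ : SimpleGraph (Fin m)) (⊤ : SimpleGraph (Fin n)) vm vn

lemma glue_adj_ll (a a' : Fin m) : (Gl).Adj (Sum.inl a) (Sum.inl a') ↔ a ≠ a' := Iff.rfl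

lemma glue_adj_rr (b b' : {x : Fin n // x ≠ vn}) :
    (Gl).Adj (Sum.inr b) (Sum.inr b') ↔ b ≠ b' := by
  show (b : Fin n) ≠ (b' : Fin n) ↔ b ≠ b'
  exact Subtype.coe_ne_coe

lemma glue_adj_lr (a : Fin m) (b : {x : Fin n // x ≠ vn}) :
    (Gl).Adj (Sum.inl a) (Sum.inr b) ↔ a = vm := by
  show (a = vm ∧ (⊤ : SimpleGraph (Fin n)).Adj vn b) ↔ a = vm
  simp [Ne.symm b.2]

lemma glue_adj_rl (a : Fin m) (b : {x : Fin n // x ≠ vn}) :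
    (Gl).Adj (Sum.inr b) (Sum.inl a) ↔ a = vm := by
  show (a = vm ∧ (⊤ : SimpleGraph (Fin n)).Adj vn b) ↔ a = vm
  simp [Ne.symm b.2]

end glue

lemma sum_ite_point {ι : Type*} [Fintype ι] [DecidableEq ι] (i : ι) (x c : ℝ) :
    ∑ j, (if j = i then x else c) = x + ((Fintype.card ι : ℝ) - 1) * c := by
  have h : ∀ j, (if j = i then x else c) = c + (if j = i then (x - c) else 0) := by
    intro j; by_cases hj : j = i <;> simp [hj]
  simp_rw [h, Finset.sum_add_distrib, Finset.sum_const, Finset.card_univ, nsmul_eq_mul,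
    Finset.sum_ite_eq' Finset.univ i (fun _ => x - c)]
  simp; ring

lemma card_ne (n : ℕ) (vn : Fin n) : Fintype.card {x : Fin n // x ≠ vn} = n - 1 := by
  classical
  rw [Fintype.card_subtype, Finset.filter_ne' Finset.univ vn,
    Finset.card_erase_of_mem (Finset.mem_univ vn), Finset.card_univ, Fintype.card_fin]

theorem part1 (m n : ℕ) (hm : 2 ≤ m) (hn : 2 ≤ n) (vm : Fin m) (vn : Fin n) :
    HasEig ((interfaceGlueOne (⊤ : SimpleGraph (Fin m)) (⊤ : SimpleGraph (Fin n))
        vm vn).lapMatrix ℝ) 1 := by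
  have hcardn : ((Fintype.card {x : Fin n // x ≠ vn} : ℕ) : ℝ) = (n : ℝ) - 1 := by
    rw [card_ne n vn]; push_cast [Nat.cast_sub (by omega : 1 ≤ n)]; ring
  have hb : ∃ b : Fin n, b ≠ vn :=
    Fintype.exists_ne_of_one_lt_card (by simp; omega) vn
  obtain ⟨b0, hb0⟩ := hb
  refine ⟨Sum.elim (fun a => if a = vm then 0 else (n:ℝ)-1) (fun _ => -((m:ℝ)-1)), ?_, ?_⟩
  · intro h
    have h2 := congrFun h (Sum.inr ⟨b0, hb0⟩)
    simp at h2
    have : (m:ℝ) ≥ 2 := by exact_mod_cast hm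
    linarith
  · funext x
    rw [lap_mulVec_ite (interfaceGlueOne (⊤ : SimpleGraph (Fin m)) (⊤ : SimpleGraph (Fin n)) vm vn)]
    cases x with
    | inl a =>
      rw [Fintype.sum_sum_type]
      simp only [glue_adj_ll, glue_adj_lr, Sum.elim_inl, Sum.elim_inr,
        Pi.smul_apply, smul_eq_mul, one_smul, Sum.elim_inl]
      by_cases ha : a = vm
      · subst ha
        have e1 : ∀ a' : Fin m,
            (if a ≠ a' then (if a = a then (0:ℝ) else (n:ℝ)-1) - (if a' = a then (0:ℝ) else (n:ℝ)-1) else 0)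
              = (if a' = a then (0:ℝ) else -((n:ℝ)-1)) := by
          intro a'
          by_cases h : a' = a
          · simp [h]
          · simp [h, Ne.symm h]
        have e2 : ∀ b : {x : Fin n // x ≠ vn},
            (if a = a then (if a = a then (0:ℝ) else (n:ℝ)-1) - (-((m:ℝ)-1)) else 0)
              = ((m:ℝ)-1) := by
          intro b; simp
        rw [Finset.sum_congr rfl (fun a' _ => e1 a'), Finset.sum_congr rfl (fun b _ => e2 b),
          sum_ite_point a 0 (-((n:ℝ)-1)), Finset.sum_const, Finset.card_univ, nsmul_eq_mul,
          hcardn, Fintype.card_fin]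
        simp
        ring
      · have e1 : ∀ a' : Fin m,
            (if a ≠ a' then (if a = vm then (0:ℝ) else (n:ℝ)-1) - (if a' = vm then (0:ℝ) else (n:ℝ)-1) else 0)
              = (if a' = vm then ((n:ℝ)-1) else 0) := by
          intro a'
          by_cases h : a' = vm
          · subst h
            simp [ha]
          · by_cases h2 : a = a' <;> simp [h, h2, ha]
        have e2 : ∀ b : {x : Fin n // x ≠ vn},
            (if a = vm then (if a = vm then (0:ℝ) else (n:ℝ)-1) - (-((m:ℝ)-1)) else 0) = (0:ℝ) := by
          intro b; simp [ha]
        rw [Finset.sum_congr rfl (fun a' _ => e1 a'), Finset.sum_congr rfl (fun b _ => e2 b),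
          Finset.sum_ite_eq' Finset.univ vm (fun _ => (n:ℝ)-1)]
        simp [ha]
    | inr b =>
      rw [Fintype.sum_sum_type]
      simp only [glue_adj_rl, glue_adj_rr, Sum.elim_inl, Sum.elim_inr,
        Pi.smul_apply, smul_eq_mul, one_smul]
      have e1 : ∀ a' : Fin m,
          (if a' = vm then (-((m:ℝ)-1)) - (if a' = vm then (0:ℝ) else (n:ℝ)-1) else 0)
            = (if a' = vm then (-((m:ℝ)-1)) else 0) := by
        intro a'
        by_cases h : a' = vm <;> simp [h]
      have e2 : ∀ b' : {x : Fin n // x ≠ vn},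
          (if b ≠ b' then (-((m:ℝ)-1)) - (-((m:ℝ)-1)) else 0) = (0:ℝ) := by
        intro b'; by_cases h : b = b' <;> simp [h]
      rw [Finset.sum_congr rfl (fun a' _ => e1 a'), Finset.sum_congr rfl (fun b' _ => e2 b'),
        Finset.sum_ite_eq' Finset.univ vm (fun _ => -((m:ℝ)-1))]
      simp

lemma sum_const_sub_sq {ι : Type*} [Fintype ι] (g : ι → ℝ) (c : ℝ) :
    ∑ b, (c - g b)^2
      = (Fintype.card ι : ℝ)*c^2 - 2*c*(∑ b, g b) + ∑ b, g b^2 := by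
  have h : ∀ b, (c - g b)^2 = c^2 - 2*(c * g b) + g b^2 := by intro b; ring
  simp_rw [h, Finset.sum_add_distrib, Finset.sum_sub_distrib, ← Finset.mul_sum,
    Finset.sum_const, Finset.card_univ, nsmul_eq_mul]
  ring

set_option maxHeartbeats 1000000 in
theorem part2 (m n : ℕ) (hm : 2 ≤ m) (hn : 2 ≤ n) (vm : Fin m) (vn : Fin n)
    (lam : ℝ) (hlam : lam ≠ 0)
    (h : HasEig ((interfaceGlueOne (⊤ : SimpleGraph (Fin m)) (⊤ : SimpleGraph (Fin n))
        vm vn).lapMatrix ℝ) lam) : 1 ≤ lam := by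
  obtain ⟨v, hv0, hv⟩ := h
  set G := interfaceGlueOne (⊤ : SimpleGraph (Fin m)) (⊤ : SimpleGraph (Fin n)) vm vn with hG
  have hm' : (2:ℝ) ≤ (m:ℝ) := by exact_mod_cast hm
  have hn' : (2:ℝ) ≤ (n:ℝ) := by exact_mod_cast hn
  have hcardn : ((Fintype.card {x : Fin n // x ≠ vn} : ℕ) : ℝ) = (n : ℝ) - 1 := by
    rw [card_ne n vn]; push_cast [Nat.cast_sub (by omega : 1 ≤ n)]; ring
  -- notation
  set T := ∑ a : Fin m, v (Sum.inl a) with hT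
  set P := ∑ a : Fin m, (v (Sum.inl a))^2 with hP
  set Sg := ∑ b : {x : Fin n // x ≠ vn}, v (Sum.inr b) with hSg
  set Qg := ∑ b : {x : Fin n // x ≠ vn}, (v (Sum.inr b))^2 with hQg
  set c := v (Sum.inl vm) with hc
  -- Step A : the entries of v sum to zero
  have key : (∑ x : Fin m ⊕ {x : Fin n // x ≠ vn}, ∑ u, if G.Adj x u then v x - v u else 0)
      = 0 := by
    have h2 : (∑ x : Fin m ⊕ {x : Fin n // x ≠ vn}, ∑ u, if G.Adj x u then v x - v u else 0)
        = -(∑ x : Fin m ⊕ {x : Fin n // x ≠ vn}, ∑ u, if G.Adj x u then v x - v u else 0) := by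
      conv_lhs => rw [Finset.sum_comm]
      rw [← Finset.sum_neg_distrib]
      refine Finset.sum_congr rfl fun u _ => ?_
      rw [← Finset.sum_neg_distrib]
      refine Finset.sum_congr rfl fun x _ => ?_
      by_cases hxu : G.Adj x u
      · rw [if_pos hxu, if_pos hxu.symm]; ring
      · rw [if_neg hxu, if_neg (fun hh => hxu hh.symm), neg_zero]
    linarith
  have hsumv : (∑ x : Fin m ⊕ {x : Fin n // x ≠ vn}, v x) = 0 := by
    have h3 : ∑ x, (G.lapMatrix ℝ *ᵥ v) x = lam * ∑ x, v x := by
      rw [hv]; simp only [Pi.smul_apply, smul_eq_mul]; rw [Finset.mul_sum]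
    have h4 : ∑ x, (G.lapMatrix ℝ *ᵥ v) x = 0 := by
      rw [Finset.sum_congr rfl (fun x _ => lap_mulVec_ite G v x)]; exact key
    have := h3.symm.trans h4
    rcases mul_eq_zero.mp this with h | h
    · exact absurd h hlam
    · exact h
  have hTS : T + Sg = 0 := by
    have hsplit := Fintype.sum_sum_type (f := fun x : Fin m ⊕ {x : Fin n // x ≠ vn} => v x)
    rw [hT, hSg]
    rw [← hsplit]
    exact hsumv
  -- Step B : quadratic form
  have hquad : lam * (∑ x, (v x)^2)
      = (∑ x : Fin m ⊕ {x : Fin n // x ≠ vn},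
          ∑ u, if G.Adj x u then (v x - v u)^2 else 0)/2 := by
    have h5 := SimpleGraph.lapMatrix_toLinearMap₂' (R := ℝ) (G := G) v
    rw [Matrix.toLinearMap₂'_apply'] at h5
    have h6 : v ⬝ᵥ (G.lapMatrix ℝ *ᵥ v) = lam * ∑ x, (v x)^2 := by
      rw [hv]
      simp only [dotProduct, Pi.smul_apply, smul_eq_mul]
      rw [Finset.mul_sum]
      exact Finset.sum_congr rfl fun x _ => by ring
    rw [← h6, h5]
  -- Step C : compute the energy
  have hD : (∑ x : Fin m ⊕ {x : Fin n // x ≠ vn},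
        ∑ u, if G.Adj x u then (v x - v u)^2 else 0)
      = (2*(m:ℝ)*P - 2*T^2) + (2*((n:ℝ)-1)*Qg - 2*Sg^2)
        + (∑ b : {x : Fin n // x ≠ vn}, (c - v (Sum.inr b))^2)
        + (∑ b : {x : Fin n // x ≠ vn}, (v (Sum.inr b) - c)^2) := by
    simp only [hG]
    rw [Fintype.sum_sum_type]
    simp only [Fintype.sum_sum_type, glue_adj_ll, glue_adj_lr, glue_adj_rl, glue_adj_rr]
    have Bll : (∑ a : Fin m, ∑ a' : Fin m,
        if a ≠ a' then (v (Sum.inl a) - v (Sum.inl a'))^2 else 0)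
        = 2*(m:ℝ)*P - 2*T^2 := by
      have e : ∀ a a' : Fin m, (if a ≠ a' then (v (Sum.inl a) - v (Sum.inl a'))^2 else 0)
          = (v (Sum.inl a) - v (Sum.inl a'))^2 := by
        intro a a'; by_cases hh : a = a' <;> simp [hh]
      rw [Finset.sum_congr rfl fun a _ => Finset.sum_congr rfl fun a' _ => e a a']
      rw [sum_sub_sq (fun a : Fin m => v (Sum.inl a))]
      rw [Fintype.card_fin, hP, hT]
    have Brr : (∑ b : {x : Fin n // x ≠ vn}, ∑ b' : {x : Fin n // x ≠ vn},
        if b ≠ b' then (v (Sum.inr b) - v (Sum.inr b'))^2 else 0)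
        = 2*((n:ℝ)-1)*Qg - 2*Sg^2 := by
      have e : ∀ b b' : {x : Fin n // x ≠ vn},
          (if b ≠ b' then (v (Sum.inr b) - v (Sum.inr b'))^2 else 0)
          = (v (Sum.inr b) - v (Sum.inr b'))^2 := by
        intro b b'; by_cases hh : b = b' <;> simp [hh]
      rw [Finset.sum_congr rfl fun b _ => Finset.sum_congr rfl fun b' _ => e b b']
      rw [sum_sub_sq (fun b : {x : Fin n // x ≠ vn} => v (Sum.inr b))]
      rw [hcardn, hQg, hSg]
    have Blr : (∑ a : Fin m, ∑ b : {x : Fin n // x ≠ vn},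
        if a = vm then (v (Sum.inl a) - v (Sum.inr b))^2 else 0)
        = ∑ b : {x : Fin n // x ≠ vn}, (c - v (Sum.inr b))^2 := by
      have e : ∀ a : Fin m, (∑ b : {x : Fin n // x ≠ vn},
          if a = vm then (v (Sum.inl a) - v (Sum.inr b))^2 else 0)
          = (if a = vm then (∑ b : {x : Fin n // x ≠ vn}, (v (Sum.inl a) - v (Sum.inr b))^2) else 0) := by
        intro a; by_cases hh : a = vm <;> simp [hh]
      rw [Finset.sum_congr rfl fun a _ => e a,
        Finset.sum_ite_eq' Finset.univ vm
          (fun a => ∑ b : {x : Fin n // x ≠ vn}, (v (Sum.inl a) - v (Sum.inr b))^2)]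
      simp [hc]
    have Brl : (∑ b : {x : Fin n // x ≠ vn}, ∑ a : Fin m,
        if a = vm then (v (Sum.inr b) - v (Sum.inl a))^2 else 0)
        = ∑ b : {x : Fin n // x ≠ vn}, (v (Sum.inr b) - c)^2 := by
      refine Finset.sum_congr rfl fun b _ => ?_
      rw [Finset.sum_ite_eq' Finset.univ vm (fun a => (v (Sum.inr b) - v (Sum.inl a))^2)]
      simp [hc]
    rw [Finset.sum_add_distrib, Finset.sum_add_distrib, Bll, Brr, Blr, Brl]
    ring
  -- expansions of the cross terms
  have hK1 : (∑ b : {x : Fin n // x ≠ vn}, (c - v (Sum.inr b))^2)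
      = ((n:ℝ)-1)*c^2 - 2*c*Sg + Qg := by
    rw [sum_const_sub_sq (fun b : {x : Fin n // x ≠ vn} => v (Sum.inr b)) c, hcardn, hSg, hQg]
  have hK2 : (∑ b : {x : Fin n // x ≠ vn}, (v (Sum.inr b) - c)^2)
      = ((n:ℝ)-1)*c^2 - 2*c*Sg + Qg := by
    rw [Finset.sum_congr rfl fun b _ => (by ring :
      (v (Sum.inr b) - c)^2 = (c - v (Sum.inr b))^2)]
    exact hK1
  have hQsplit : (∑ x, (v x)^2) = P + Qg := by
    rw [hP, hQg]
    exact Fintype.sum_sum_type (fun x : Fin m ⊕ {x : Fin n // x ≠ vn} => (v x)^2)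
  -- Cauchy-Schwarz inequalities
  have hC1 : (T - c)^2 ≤ ((m:ℝ)-1)*(P - c^2) := by
    have h7 : (∑ a ∈ Finset.univ.erase vm, v (Sum.inl a)) + v (Sum.inl vm)
        = ∑ a : Fin m, v (Sum.inl a) :=
      Finset.sum_erase_add _ _ (Finset.mem_univ vm)
    have h8 : (∑ a ∈ Finset.univ.erase vm, (v (Sum.inl a))^2) + (v (Sum.inl vm))^2
        = ∑ a : Fin m, (v (Sum.inl a))^2 :=
      Finset.sum_erase_add _ _ (Finset.mem_univ vm)
    have h9 : (∑ a ∈ Finset.univ.erase vm, v (Sum.inl a))^2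
        ≤ (Finset.univ.erase vm).card * ∑ a ∈ Finset.univ.erase vm, (v (Sum.inl a))^2 :=
      sq_sum_le_card_mul_sum_sq
    have h10 : ((Finset.univ.erase vm).card : ℝ) = (m:ℝ) - 1 := by
      rw [Finset.card_erase_of_mem (Finset.mem_univ vm), Finset.card_univ, Fintype.card_fin]
      push_cast [Nat.cast_sub (by omega : 1 ≤ m)]; ring
    have h11 : (∑ a ∈ Finset.univ.erase vm, v (Sum.inl a)) = T - c := by
      rw [hT, hc]; linarith [h7]
    have h12 : (∑ a ∈ Finset.univ.erase vm, (v (Sum.inl a))^2) = P - c^2 := by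
      rw [hP, hc]; nlinarith [h8]
    rw [h11, h12, h10] at h9
    exact h9
  have hC2 : Sg^2 ≤ ((n:ℝ)-1)*Qg := by
    have h9 : (∑ b : {x : Fin n // x ≠ vn}, v (Sum.inr b))^2
        ≤ (Finset.univ : Finset {x : Fin n // x ≠ vn}).card
          * ∑ b : {x : Fin n // x ≠ vn}, (v (Sum.inr b))^2 :=
      sq_sum_le_card_mul_sum_sq
    rw [Finset.card_univ, hcardn, ← hSg, ← hQg] at h9
    exact h9
  -- positivity
  have hQpos : 0 < ∑ x, (v x)^2 := by
    obtain ⟨x, hx⟩ := Function.ne_iff.mp hv0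
    refine Finset.sum_pos' (fun i _ => sq_nonneg _) ⟨x, Finset.mem_univ x, ?_⟩
    have : v x ≠ 0 := hx
    positivity
  -- finish
  have hE : lam * (P + Qg)
      = (m:ℝ)*P - T^2 + (n:ℝ)*Qg - Sg^2 + ((n:ℝ)-1)*c^2 - 2*c*Sg := by
    rw [← hQsplit, hquad, hD, hK1, hK2]; ring
  have hSg' : Sg = -T := by linarith
  have hSg2 : Sg^2 = T^2 := by rw [hSg']; ring
  have hEQ : 0 ≤ lam * (P + Qg) - (P + Qg) := by
    have hident : lam * (P + Qg) - (P + Qg)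
        = (((m:ℝ)-1)*(P - c^2) - (T-c)^2) + (((n:ℝ)-1)*Qg - T^2)
          + ((m:ℝ)+(n:ℝ)-1)*c^2 := by
      rw [hE, hSg']; ring
    have t1 : 0 ≤ ((m:ℝ)-1)*(P - c^2) - (T-c)^2 := by linarith [hC1]
    have t2 : 0 ≤ ((n:ℝ)-1)*Qg - T^2 := by linarith [hC2, hSg2.symm.le, hSg2.le]
    have t3 : 0 ≤ ((m:ℝ)+(n:ℝ)-1)*c^2 :=
      mul_nonneg (by linarith) (sq_nonneg c)
    rw [hident]; linarith
  rw [hQsplit] at hQpos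
  nlinarith [hEQ, hQpos]


theorem fiedler_interfaceGlueOne_complete (m n : ℕ) (hm : 2 ≤ m) (hn : 2 ≤ n)
    (vm : Fin m) (vn : Fin n) :
    HasEig ((interfaceGlueOne (⊤ : SimpleGraph (Fin m)) (⊤ : SimpleGraph (Fin n))
        vm vn).lapMatrix ℝ) 1 ∧
    (∀ lam : ℝ, lam ≠ 0 →
      HasEig ((interfaceGlueOne (⊤ : SimpleGraph (Fin m)) (⊤ : SimpleGraph (Fin n))
        vm vn).lapMatrix ℝ) lam → 1 ≤ lam) := by
  exact ⟨part1 m n hm hn vm vn, fun lam hlam h => part2 m n hm hn vm vn lam hlam h⟩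
end

section
/- Let n ≥ 2 and let Γ be the one-edge bridge gluing of two copies of the complete graph K_n, joining a chosen vertex of the first copy to a chosen vertex of the second copy by a single new edge, with Laplacian matrix L. Then the Fiedler value of Γ equals (n + 2 − √(n² + 4n − 4))/2: that is, this number is an eigenvalue of L, and every real eigenvalue λ of L with λ ≠ 0 satisfies λ ≥ (n + 2 − √(n² + 4n − 4))/2. -/
open scoped Classical
open Matrix Finset

/-- The one-edge bridge gluing of `G₁` and `G₂`: the graph on `V₁ ⊕ V₂` with a single new
edge joining `v₁` to `v₂`. -/
def bridgeGlueOne {V₁ V₂ : Type*} (G₁ : SimpleGraph V₁) (G₂ : SimpleGraph V₂)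
    (v₁ : V₁) (v₂ : V₂) : SimpleGraph (V₁ ⊕ V₂) where
  Adj x y :=
    match x, y with
    | Sum.inl u, Sum.inl v => G₁.Adj u v
    | Sum.inr u, Sum.inr v => G₂.Adj u v
    | Sum.inl u, Sum.inr v => u = v₁ ∧ v = v₂
    | Sum.inr u, Sum.inl v => v = v₁ ∧ u = v₂
  symm := by
    constructor
    rintro (u | u) (v | v) h
    · exact G₁.adj_symm h
    · exact h
    · exact h
    · exact G₂.adj_symm h
  loopless := by
    constructor
    rintro (u | u) h
    · exact G₁.ne_of_adj h rfl
    · exact G₂.ne_of_adj h rfl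

section helpers

variable {V₁ V₂ : Type*} {G₁ : SimpleGraph V₁} {G₂ : SimpleGraph V₂} {v₁ : V₁} {v₂ : V₂}

@[simp] lemma bg_adj_ll (u w : V₁) :
    (bridgeGlueOne G₁ G₂ v₁ v₂).Adj (Sum.inl u) (Sum.inl w) ↔ G₁.Adj u w := Iff.rfl
@[simp] lemma bg_adj_rr (u w : V₂) :
    (bridgeGlueOne G₁ G₂ v₁ v₂).Adj (Sum.inr u) (Sum.inr w) ↔ G₂.Adj u w := Iff.rfl
@[simp] lemma bg_adj_lr (u : V₁) (w : V₂) :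
    (bridgeGlueOne G₁ G₂ v₁ v₂).Adj (Sum.inl u) (Sum.inr w) ↔ u = v₁ ∧ w = v₂ := Iff.rfl
@[simp] lemma bg_adj_rl (u : V₂) (w : V₁) :
    (bridgeGlueOne G₁ G₂ v₁ v₂).Adj (Sum.inr u) (Sum.inl w) ↔ w = v₁ ∧ u = v₂ := Iff.rfl

lemma lap_mulVec_eq {V : Type*} [Fintype V] [DecidableEq V] (G : SimpleGraph V)
    [DecidableRel G.Adj] (f : V → ℝ) (i : V) :
    (G.lapMatrix ℝ *ᵥ f) i = ∑ j, if G.Adj i j then f i - f j else 0 := by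
  rw [SimpleGraph.lapMatrix_mulVec_apply, SimpleGraph.degree_eq_sum_if_adj,
    SimpleGraph.neighborFinset_eq_filter, Finset.sum_filter, Finset.sum_mul,
    ← Finset.sum_sub_distrib]
  refine Finset.sum_congr rfl fun j _ => ?_
  by_cases h : G.Adj i j <;> simp [h]

lemma sum_top_sub {n : ℕ} (g : Fin n → ℝ) (a : ℝ) (u : Fin n) :
    ∑ w : Fin n, (if (⊤ : SimpleGraph (Fin n)).Adj u w then a - g w else 0)
      = (n : ℝ) * a - (∑ w, g w) - (a - g u) := by
  have h : ∀ w : Fin n, (if (⊤ : SimpleGraph (Fin n)).Adj u w then a - g w else 0)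
      = (a - g w) - (if w = u then a - g w else 0) := by
    intro w
    by_cases h : w = u
    · simp [h]
    · have h' : u ≠ w := fun hh => h hh.symm
      simp [h, h', SimpleGraph.top_adj]
  rw [Finset.sum_congr rfl fun w _ => h w, Finset.sum_sub_distrib,
    Finset.sum_ite_eq' Finset.univ u, Finset.sum_sub_distrib, Finset.sum_const,
    Finset.card_univ, Fintype.card_fin]
  simp only [Finset.mem_univ, if_true]
  push_cast
  ring

end helpers

section fixed

variable {n : ℕ} (v₁ v₂ : Fin n)

local notation "G" => bridgeGlueOne (⊤ : SimpleGraph (Fin n)) (⊤ : SimpleGraph (Fin n)) v₁ v₂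

lemma lapL (f : Fin n ⊕ Fin n → ℝ) (u : Fin n) :
    ((bridgeGlueOne (⊤ : SimpleGraph (Fin n)) (⊤ : SimpleGraph (Fin n)) v₁ v₂).lapMatrix ℝ *ᵥ f)
      (Sum.inl u) =
    (n : ℝ) * f (Sum.inl u) - (∑ w, f (Sum.inl w)) +
      (if u = v₁ then f (Sum.inl v₁) - f (Sum.inr v₂) else 0) := by
  rw [lap_mulVec_eq, Fintype.sum_sum_type]
  have h1 := sum_top_sub (fun w => f (Sum.inl w)) (f (Sum.inl u)) u
  have h2 : ∑ w : Fin n, (if (G).Adj (Sum.inl u) (Sum.inr w) then f (Sum.inl u) - f (Sum.inr w) else 0)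
      = (if u = v₁ then f (Sum.inl u) - f (Sum.inr v₂) else 0) := by
    by_cases h : u = v₁
    · simp [h, Finset.sum_ite_eq' Finset.univ v₂]
    · simp [h]
  simp only [bg_adj_ll, bg_adj_lr] at *
  rw [h2, h1]
  by_cases h : u = v₁ <;> simp [h] <;> ring

lemma lapR (f : Fin n ⊕ Fin n → ℝ) (u : Fin n) :
    ((bridgeGlueOne (⊤ : SimpleGraph (Fin n)) (⊤ : SimpleGraph (Fin n)) v₁ v₂).lapMatrix ℝ *ᵥ f)
      (Sum.inr u) =
    (n : ℝ) * f (Sum.inr u) - (∑ w, f (Sum.inr w)) +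
      (if u = v₂ then f (Sum.inr v₂) - f (Sum.inl v₁) else 0) := by
  rw [lap_mulVec_eq, Fintype.sum_sum_type]
  have h1 := sum_top_sub (fun w => f (Sum.inr w)) (f (Sum.inr u)) u
  have h2 : ∑ w : Fin n, (if (G).Adj (Sum.inr u) (Sum.inl w) then f (Sum.inr u) - f (Sum.inl w) else 0)
      = (if u = v₂ then f (Sum.inr u) - f (Sum.inl v₁) else 0) := by
    by_cases h : u = v₂
    · simp [h, Finset.sum_ite_eq' Finset.univ v₁]
    · simp [h]
  simp only [bg_adj_rr, bg_adj_rl] at *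
  rw [h2, h1]
  by_cases h : u = v₂ <;> simp [h] <;> ring

lemma sum_if_eq (v : Fin n) (a b : ℝ) :
    ∑ w : Fin n, (if w = v then a else b) = a + ((n : ℝ) - 1) * b := by
  have h : ∀ w : Fin n, (if w = v then a else b) = b + (if w = v then a - b else 0) := by
    intro w; by_cases h : w = v <;> simp [h]
  rw [Finset.sum_congr rfl fun w _ => h w, Finset.sum_add_distrib,
    Finset.sum_ite_eq' Finset.univ v, Finset.sum_const, Finset.card_univ, Fintype.card_fin]
  simp only [Finset.mem_univ, if_true]
  push_cast
  ring

end fixed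

theorem fiedler_bridgeGlueOne_complete_same (n : ℕ) (hn : 2 ≤ n) (v₁ v₂ : Fin n) :
    HasEig ((bridgeGlueOne (⊤ : SimpleGraph (Fin n)) (⊤ : SimpleGraph (Fin n))
        v₁ v₂).lapMatrix ℝ)
      (((n : ℝ) + 2 - Real.sqrt ((n : ℝ) ^ 2 + 4 * n - 4)) / 2) ∧
    (∀ lam : ℝ, lam ≠ 0 →
      HasEig ((bridgeGlueOne (⊤ : SimpleGraph (Fin n)) (⊤ : SimpleGraph (Fin n))
        v₁ v₂).lapMatrix ℝ) lam →
      ((n : ℝ) + 2 - Real.sqrt ((n : ℝ) ^ 2 + 4 * n - 4)) / 2 ≤ lam) := by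
  have hn2 : (2 : ℝ) ≤ (n : ℝ) := by exact_mod_cast hn
  set s : ℝ := Real.sqrt ((n : ℝ) ^ 2 + 4 * n - 4) with hs_def
  have hs0 : 0 ≤ s := Real.sqrt_nonneg _
  have hs2 : s ^ 2 = (n : ℝ) ^ 2 + 4 * n - 4 := by
    rw [hs_def, Real.sq_sqrt]; nlinarith
  set lam0 : ℝ := ((n : ℝ) + 2 - s) / 2 with hlam0_def
  have hquad : lam0 ^ 2 - ((n : ℝ) + 2) * lam0 + 2 = 0 := by
    rw [hlam0_def]; linear_combination (1/4 : ℝ) * hs2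
  haveI : Nontrivial (Fin n) := Fin.nontrivial_iff_two_le.mpr hn
  constructor
  · -- eigenvector
    refine ⟨Sum.elim (fun u => if u = v₁ then 1 - lam0 else 1)
      (fun u => if u = v₂ then -(1 - lam0) else -1), ?_, ?_⟩
    · obtain ⟨u₀, hu₀⟩ := exists_ne v₁
      intro h
      have := congrFun h (Sum.inl u₀)
      simp [hu₀] at this
    · funext i
      have hS1 : ∑ w : Fin n, Sum.elim (fun u => if u = v₁ then 1 - lam0 else 1)
          (fun u => if u = v₂ then -(1 - lam0) else -1) (Sum.inl w) = (n : ℝ) - lam0 := by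
        simp only [Sum.elim_inl]
        rw [sum_if_eq]; ring
      have hS2 : ∑ w : Fin n, Sum.elim (fun u => if u = v₁ then 1 - lam0 else 1)
          (fun u => if u = v₂ then -(1 - lam0) else -1) (Sum.inr w) = -((n : ℝ) - lam0) := by
        simp only [Sum.elim_inr]
        rw [sum_if_eq]; ring
      cases i with
      | inl u =>
        rw [lapL, hS1]
        by_cases h : u = v₁
        · rw [h]
          simp only [Sum.elim_inl, Sum.elim_inr, Pi.smul_apply, smul_eq_mul]
          simp only [if_true]
          linear_combination hquad
        · simp only [Sum.elim_inl, if_neg h, Pi.smul_apply, smul_eq_mul]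
          ring
      | inr u =>
        rw [lapR, hS2]
        by_cases h : u = v₂
        · rw [h]
          simp only [Sum.elim_inl, Sum.elim_inr, Pi.smul_apply, smul_eq_mul]
          simp only [if_true]
          linear_combination -hquad
        · simp only [Sum.elim_inr, if_neg h, Pi.smul_apply, smul_eq_mul]
          ring
  · -- minimality
    rintro lam hlam ⟨v, hv0, hveq⟩
    by_cases hln : lam = (n : ℝ)
    · subst hln; nlinarith
    have heq : ∀ i, ((bridgeGlueOne (⊤ : SimpleGraph (Fin n)) (⊤ : SimpleGraph (Fin n))
        v₁ v₂).lapMatrix ℝ *ᵥ v) i = lam * v i := by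
      intro i; rw [hveq]; simp
    have hnl : (n : ℝ) - lam ≠ 0 := sub_ne_zero.mpr (Ne.symm hln)
    obtain ⟨u₀, hu₀⟩ := exists_ne v₁
    obtain ⟨u₂, hu₂⟩ := exists_ne v₂
    set x₁ : ℝ := v (Sum.inl v₁) with hx₁def
    set x₂ : ℝ := v (Sum.inr v₂) with hx₂def
    set y₁ : ℝ := v (Sum.inl u₀) with hy₁def
    set y₂ : ℝ := v (Sum.inr u₂) with hy₂def
    set S₁ : ℝ := ∑ w, v (Sum.inl w) with hS₁def
    set S₂ : ℝ := ∑ w, v (Sum.inr w) with hS₂def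
    have hLl : ∀ u : Fin n, lam * v (Sum.inl u) = (n : ℝ) * v (Sum.inl u) - S₁ +
        (if u = v₁ then x₁ - x₂ else 0) := by
      intro u; rw [← heq, lapL]
    have hLr : ∀ u : Fin n, lam * v (Sum.inr u) = (n : ℝ) * v (Sum.inr u) - S₂ +
        (if u = v₂ then x₂ - x₁ else 0) := by
      intro u; rw [← heq, lapR]
    have hc1 : ∀ u : Fin n, u ≠ v₁ → v (Sum.inl u) = y₁ := by
      intro u hu
      have h1 := hLl u; rw [if_neg hu] at h1
      have h2 := hLl u₀; rw [if_neg hu₀] at h2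
      have : ((n : ℝ) - lam) * v (Sum.inl u) = ((n : ℝ) - lam) * y₁ := by
        rw [hy₁def]; linear_combination h2 - h1
      exact mul_left_cancel₀ hnl this
    have hc2 : ∀ u : Fin n, u ≠ v₂ → v (Sum.inr u) = y₂ := by
      intro u hu
      have h1 := hLr u; rw [if_neg hu] at h1
      have h2 := hLr u₂; rw [if_neg hu₂] at h2
      have : ((n : ℝ) - lam) * v (Sum.inr u) = ((n : ℝ) - lam) * y₂ := by
        rw [hy₂def]; linear_combination h2 - h1
      exact mul_left_cancel₀ hnl this
    have hS1 : S₁ = x₁ + ((n : ℝ) - 1) * y₁ := by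
      rw [hS₁def, show (∑ w, v (Sum.inl w)) = ∑ w : Fin n, (if w = v₁ then x₁ else y₁) from
        Finset.sum_congr rfl fun w _ => by
          by_cases h : w = v₁
          · rw [if_pos h, h, hx₁def]
          · rw [if_neg h, hc1 w h], sum_if_eq]
    have hS2 : S₂ = x₂ + ((n : ℝ) - 1) * y₂ := by
      rw [hS₂def, show (∑ w, v (Sum.inr w)) = ∑ w : Fin n, (if w = v₂ then x₂ else y₂) from
        Finset.sum_congr rfl fun w _ => by
          by_cases h : w = v₂
          · rw [if_pos h, h, hx₂def]
          · rw [if_neg h, hc2 w h], sum_if_eq]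
    have hx1 : x₁ = (1 - lam) * y₁ := by
      have h := hLl u₀; rw [if_neg hu₀, hS1, ← hy₁def] at h
      have : ((n : ℝ) - lam) * x₁ = ((n : ℝ) - lam) * ((1 - lam) * y₁) := by
        linear_combination ((n : ℝ) - lam) * h
      exact mul_left_cancel₀ hnl this
    have hx2 : x₂ = (1 - lam) * y₂ := by
      have h := hLr u₂; rw [if_neg hu₂, hS2, ← hy₂def] at h
      have : ((n : ℝ) - lam) * x₂ = ((n : ℝ) - lam) * ((1 - lam) * y₂) := by
        linear_combination ((n : ℝ) - lam) * h
      exact mul_left_cancel₀ hnl this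
    have hb1 := hLl v₁; rw [if_pos rfl, ← hx₁def, hS1, hx1, hx2] at hb1
    have hb2 := hLr v₂; rw [if_pos rfl, ← hx₂def, hS2, hx1, hx2] at hb2
    have hP1 : (lam ^ 2 - ((n : ℝ) + 1) * lam + 1) * y₁ = (1 - lam) * y₂ := by
      linear_combination -hb1
    have hP2 : (lam ^ 2 - ((n : ℝ) + 1) * lam + 1) * y₂ = (1 - lam) * y₁ := by
      linear_combination -hb2
    have hy : y₁ ≠ 0 ∨ y₂ ≠ 0 := by
      by_contra h
      push_neg at h
      apply hv0
      funext i
      rw [Pi.zero_apply]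
      cases i with
      | inl u =>
        rcases eq_or_ne u v₁ with hu | hu
        · rw [hu, ← hx₁def, hx1, h.1, mul_zero]
        · rw [hc1 u hu, h.1]
      | inr u =>
        rcases eq_or_ne u v₂ with hu | hu
        · rw [hu, ← hx₂def, hx2, h.2, mul_zero]
        · rw [hc2 u hu, h.2]
    have hk : lam * (lam - (n : ℝ)) * (lam ^ 2 - ((n : ℝ) + 2) * lam + 2) = 0 := by
      rcases hy with hy | hy
      · have hk1 : lam * (lam - (n : ℝ)) * (lam ^ 2 - ((n : ℝ) + 2) * lam + 2) * y₁ = 0 := by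
          linear_combination (lam ^ 2 - ((n : ℝ) + 1) * lam + 1) * hP1 + (1 - lam) * hP2
        exact (mul_eq_zero.mp hk1).resolve_right hy
      · have hk2 : lam * (lam - (n : ℝ)) * (lam ^ 2 - ((n : ℝ) + 2) * lam + 2) * y₂ = 0 := by
          linear_combination (lam ^ 2 - ((n : ℝ) + 1) * lam + 1) * hP2 + (1 - lam) * hP1
        exact (mul_eq_zero.mp hk2).resolve_right hy
    have hq : lam ^ 2 - ((n : ℝ) + 2) * lam + 2 = 0 := by
      rcases mul_eq_zero.mp hk with h | h
      · rcases mul_eq_zero.mp h with h | h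
        · exact absurd h hlam
        · exact absurd (by linarith [sub_eq_zero.mp h] : lam = (n : ℝ)) hln
      · exact h
    have hfac : (lam - lam0) * (lam - ((n : ℝ) + 2 + s) / 2) = 0 := by
      rw [hlam0_def]
      linear_combination hq - (1/4 : ℝ) * hs2
    rcases mul_eq_zero.mp hfac with h | h
    · rw [sub_eq_zero.mp h]
    · have := sub_eq_zero.mp h
      rw [hlam0_def, this]
      linarith
end
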